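/- Let p be a prime and a a positive integer, let A be the adjacency matrix of the modified divisor prime graph G*_Dp(p^a), and let μ = 1/(a+1). If B is a positive semidefinite real matrix with B² = (A − μI)², then the diagonal entry of B at the vertex 1 equals (2a² + 3a)/((a+1)√(4a+1)). -/

import Mathlib

set_option maxHeartbeats 1000000

open Matrix Finset

private lemma aux_vecMulVec_mul {ι : Type*} [Fintype ι] (a b c d : ι → ℝ) :
    Matrix.vecMulVec a b * Matrix.vecMulVec c d
      = (b ⬝ᵥ c) • Matrix.vecMulVec a d := by
  ext i j
  simp only [Matrix.mul_apply, Matrix.vecMulVec_apply, Matrix.smul_apply,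
    dotProduct, smul_eq_mul]
  rw [Finset.sum_mul]
  exact Finset.sum_congr rfl fun k _ => by ring

private lemma aux_vecMulVec_mulVec {ι : Type*} [Fintype ι] (a b x : ι → ℝ) :
    Matrix.vecMulVec a b *ᵥ x = (b ⬝ᵥ x) • a := by
  ext i
  simp only [Matrix.mulVec, Matrix.vecMulVec_apply, dotProduct, Pi.smul_apply,
    smul_eq_mul]
  rw [Finset.sum_mul]
  exact Finset.sum_congr rfl fun k _ => by ring

private lemma aux_psd_smul {ι : Type*} [Fintype ι] {M : Matrix ι ι ℝ}
    (hM : M.PosSemidef) {c : ℝ} (hc : 0 ≤ c) : (c • M).PosSemidef := by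
  refine Matrix.posSemidef_iff_dotProduct_mulVec.mpr ⟨?_, fun x => ?_⟩
  · have h1 := hM.1
    rw [Matrix.IsHermitian, Matrix.conjTranspose_smul, h1, star_trivial]
  · rw [Matrix.smul_mulVec, dotProduct_smul, smul_eq_mul]
    exact mul_nonneg hc (hM.dotProduct_mulVec_nonneg x)

private lemma aux_psd_outer {ι : Type*} [Fintype ι] (w : ι → ℝ) :
    (Matrix.vecMulVec w w).PosSemidef := by
  refine Matrix.posSemidef_iff_dotProduct_mulVec.mpr ⟨?_, fun x => ?_⟩
  · ext i j
    simp only [Matrix.conjTranspose_apply, Matrix.vecMulVec_apply, star_trivial]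
    ring
  · rw [aux_vecMulVec_mulVec, dotProduct_smul, smul_eq_mul]
    have hx : star x = x := by ext i; simp
    rw [hx, dotProduct_comm x w]
    exact mul_self_nonneg _

private lemma aux_main {ι : Type*} [Fintype ι] [DecidableEq ι] (v1 : ι) (a : ℕ)
    (ha : 0 < a) (hcard : Fintype.card ι = a + 1)
    (A B : Matrix ι ι ℝ)
    (hAdj : ∀ u v : ι, A u v = if u = v1 ∨ v = v1 then 1 else 0)
    (hB : B.PosSemidef)
    (hBsq : B ^ 2 = (A - (1 / ((a : ℝ) + 1)) • 1) ^ 2) :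
    B v1 v1 = (2 * (a : ℝ) ^ 2 + 3 * (a : ℝ)) /
        (((a : ℝ) + 1) * Real.sqrt (4 * (a : ℝ) + 1)) := by
  classical
  have hha : (1:ℝ) ≤ (a:ℝ) := by exact_mod_cast ha
  have hs_nonneg : (0:ℝ) ≤ 4 * (a:ℝ) + 1 := by linarith
  set s : ℝ := Real.sqrt (4 * (a:ℝ) + 1) with hs_def
  have hs2 : s ^ 2 = 4 * (a:ℝ) + 1 := Real.sq_sqrt hs_nonneg
  have hs_pos : 0 < s := Real.sqrt_pos.mpr (by linarith)
  have hs_gt : 2 < s := by nlinarith [hs2, hs_pos]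
  set μ : ℝ := 1 / ((a:ℝ) + 1) with hμ_def
  have hμ_pos : 0 < μ := by rw [hμ_def]; positivity
  set lp : ℝ := (1 + s) / 2 with hlp
  set lm : ℝ := (1 - s) / 2 with hlm
  have hsum1 : lp + lm = 1 := by rw [hlp, hlm]; ring
  have hprod : lp * lm = -(a:ℝ) := by
    rw [hlp, hlm]; linear_combination (-1/4 : ℝ) * hs2
  set np : ℝ := lp ^ 2 + a with hnp
  set nm : ℝ := lm ^ 2 + a with hnm
  have hnp_pos : 0 < np := by rw [hnp]; positivity
  have hnm_pos : 0 < nm := by rw [hnm]; positivity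
  -- eigenvectors
  set wp : ι → ℝ := fun d => if d = v1 then lp else 1 with hwp
  set wm : ι → ℝ := fun d => if d = v1 then lm else 1 with hwm
  -- sum lemma
  have hsum : ∀ g h : ℝ, (∑ x : ι, (if x = v1 then g else h)) = g + a * h := by
    intro g h
    have he : ∀ x : ι, (if x = v1 then g else h) = h + (if x = v1 then g - h else 0) := by
      intro x; by_cases hx : x = v1 <;> simp [hx]
    rw [Finset.sum_congr rfl fun x _ => he x, Finset.sum_add_distrib, Finset.sum_const,
      Finset.sum_ite_eq' Finset.univ v1 fun _ => g - h]
    simp [Finset.card_univ, hcard]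
    ring
  have hdot : ∀ l m : ℝ, (fun d : ι => if d = v1 then l else (1:ℝ)) ⬝ᵥ
      (fun d : ι => if d = v1 then m else (1:ℝ)) = l * m + a := by
    intro l m
    have he : ∀ x : ι, (if x = v1 then l else (1:ℝ)) * (if x = v1 then m else 1)
        = (if x = v1 then l * m else 1) := by
      intro x; by_cases hx : x = v1 <;> simp [hx]
    simp only [dotProduct, he]
    rw [hsum]; ring
  have hpp : wp ⬝ᵥ wp = np := by rw [hwp, hdot, hnp]; ring
  have hmm : wm ⬝ᵥ wm = nm := by rw [hwm, hdot, hnm]; ring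
  have hpm : wp ⬝ᵥ wm = 0 := by rw [hwp, hwm, hdot]; linarith [hprod]
  have hmp : wm ⬝ᵥ wp = 0 := by rw [hwm, hwp, hdot]; nlinarith [hprod]
  set X : Matrix ι ι ℝ := vecMulVec wp wp with hX
  set Y : Matrix ι ι ℝ := vecMulVec wm wm with hY
  -- decomposition of A
  have hAdec : A = (lp / np) • X + (lm / nm) • Y := by
    ext u v
    rw [hAdj u v]
    simp only [Matrix.add_apply, Matrix.smul_apply, hX, hY, vecMulVec_apply, hwp, hwm,
      smul_eq_mul]
    by_cases hu : u = v1 <;> by_cases hv : v = v1 <;>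
        simp only [hu, hv, if_true, if_false, true_or, or_true, or_self, mul_one, one_mul,
          or_false, false_or]
    · -- 1 = lp/np * (lp*lp) + lm/nm * (lm*lm)
      rw [hnp, hnm]
      field_simp
      linear_combination (-(a:ℝ)/4) * hs2
    · rw [hnp, hnm]
      field_simp
      linear_combination (-(s^2 + 4*(a:ℝ) - 1)/16) * hs2
    · rw [hnp, hnm]
      field_simp
      linear_combination (-(s^2 + 4*(a:ℝ) - 1)/16) * hs2
    · rw [hnp, hnm]
      field_simp
      linear_combination ((1:ℝ)/4) * hs2
  -- the candidate square root
  set dp : ℝ := (lp - 2 * μ) / np with hdp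
  set dm : ℝ := (-lm) / nm with hdm
  have h2μ : 2 * μ ≤ 1 := by
    rw [hμ_def, mul_one_div, div_le_one (by linarith : (0:ℝ) < (a:ℝ)+1)]
    linarith
  have hdp_nonneg : 0 ≤ dp := by
    rw [hdp]
    apply div_nonneg _ hnp_pos.le
    rw [hlp]; linarith
  have hdm_nonneg : 0 ≤ dm := by
    rw [hdm]
    apply div_nonneg _ hnm_pos.le
    rw [hlm]; linarith
  set C : Matrix ι ι ℝ := μ • (1 : Matrix ι ι ℝ) + dp • X + dm • Y with hC
  have hXX : X * X = np • X := by rw [hX, aux_vecMulVec_mul, hpp]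
  have hYY : Y * Y = nm • Y := by rw [hY, aux_vecMulVec_mul, hmm]
  have hXY : X * Y = 0 := by rw [hX, hY, aux_vecMulVec_mul, hpm, zero_smul]
  have hYX : Y * X = 0 := by rw [hY, hX, aux_vecMulVec_mul, hmp, zero_smul]
  -- C is positive semidefinite
  have hCpsd : C.PosSemidef := by
    rw [hC]
    exact ((aux_psd_smul Matrix.PosSemidef.one hμ_pos.le).add
      (aux_psd_smul (aux_psd_outer wp) hdp_nonneg)).add
      (aux_psd_smul (aux_psd_outer wm) hdm_nonneg)
  -- C squares to M²
  have hM : A - μ • (1 : Matrix ι ι ℝ) = (lp / np) • X + ((lm / nm) • Y + (-μ) • 1) := by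
    rw [hAdec, neg_smul, sub_eq_add_neg, add_assoc]
  have hC2 : C ^ 2 = (A - μ • 1) ^ 2 := by
    rw [hC, hM, pow_two, pow_two, add_assoc]
    simp only [add_mul, mul_add, smul_mul_assoc, mul_smul_comm, smul_smul,
      one_mul, mul_one, hXX, hYY, hXY, hYX, smul_zero, add_zero, zero_add, smul_add]
    match_scalars
    · ring
    · rw [hdp, hnp]
      field_simp
      ring_nf
    · rw [hdm, hnm]
      field_simp
      ring_nf
  -- uniqueness of the psd square root
  have hBC : B = C := by
    open scoped MatrixOrder in
    exact (CFC.sq_eq_sq_iff B C hB.nonneg hCpsd.nonneg).mp (hBsq.trans hC2.symm)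
  rw [hBC]
  have h1 : C v1 v1 = μ + dp * (lp * lp) + dm * (lm * lm) := by
    rw [hC]
    simp only [Matrix.add_apply, Matrix.smul_apply, hX, hY, Matrix.vecMulVec_apply,
      hwp, hwm, smul_eq_mul, Matrix.one_apply_eq, if_true, mul_one]
  rw [h1, hdp, hdm, hnp, hnm, hμ_def]
  rw [eq_div_iff (by positivity : (0:ℝ) < ((a:ℝ)+1) * s).ne']
  field_simp
  have ha' : (a:ℝ) = (s^2 - 1)/4 := by linarith
  rw [ha']
  ring

theorem vertexEnergy_one_modifiedDivisorPrimeGraph_primePow (p a : ℕ) (hp : p.Prime)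
    (ha : 0 < a)
    (A B : Matrix {d : ℕ // d ∈ (p ^ a).divisors} {d : ℕ // d ∈ (p ^ a).divisors} ℝ)
    (hA : ∀ u v : {d : ℕ // d ∈ (p ^ a).divisors},
      A u v = if Nat.gcd u.1 v.1 = 1 then 1 else 0)
    (hB : B.PosSemidef)
    (hBsq : B ^ 2 = (A - (1 / ((a : ℝ) + 1)) • 1) ^ 2) :
    B ⟨1, Nat.one_mem_divisors.mpr (pow_ne_zero a hp.ne_zero)⟩
        ⟨1, Nat.one_mem_divisors.mpr (pow_ne_zero a hp.ne_zero)⟩ =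
      (2 * (a : ℝ) ^ 2 + 3 * (a : ℝ)) /
        (((a : ℝ) + 1) * Real.sqrt (4 * (a : ℝ) + 1)) := by
  classical
  have hone : (1 : ℕ) ∈ (p ^ a).divisors := Nat.one_mem_divisors.mpr (pow_ne_zero a hp.ne_zero)
  have hcard : Fintype.card {d : ℕ // d ∈ (p ^ a).divisors} = a + 1 := by
    rw [Fintype.card_coe, Nat.divisors_prime_pow hp, Finset.card_map, Finset.card_range]
  refine aux_main ⟨1, hone⟩ a ha hcard A B ?_ hB hBsq
  intro u v
  rw [hA u v]
  congr 1
  simp only [eq_iff_iff]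
  constructor
  · intro hg
    by_contra hc
    push_neg at hc
    obtain ⟨hu, hv⟩ := hc
    obtain ⟨i, hi, hui⟩ := (Nat.dvd_prime_pow hp).mp (Nat.mem_divisors.mp u.2).1
    obtain ⟨j, hj, hvj⟩ := (Nat.dvd_prime_pow hp).mp (Nat.mem_divisors.mp v.2).1
    have hi0 : i ≠ 0 := by
      rintro rfl; exact hu (Subtype.ext (by simpa using hui))
    have hj0 : j ≠ 0 := by
      rintro rfl; exact hv (Subtype.ext (by simpa using hvj))
    have hpu : p ∣ u.1 := hui ▸ dvd_pow_self p hi0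
    have hpv : p ∣ v.1 := hvj ▸ dvd_pow_self p hj0
    have hd1 : p ∣ 1 := hg ▸ Nat.dvd_gcd hpu hpv
    have h2 := Nat.le_of_dvd one_pos hd1
    have h3 := hp.two_le
    omega
  · rintro (h1 | h1)
    · rw [show u.1 = 1 from congrArg Subtype.val h1, Nat.gcd_one_left]
    · rw [show v.1 = 1 from congrArg Subtype.val h1, Nat.gcd_one_right]
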